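/- arXiv:1405.6128 — 4 statements merged into one kernel-verified Lean document; each statement's English description precedes it below -/
import Mathlib

section
/- Let Δ, k, l be natural numbers with Δ < k + 1 < Δ + l, and let z ∈ ℂ with z ≠ 0. Work in the field ℂ(X)((q)) of formal Laurent series in q over the rational function field ℂ(X), and for n ∈ ℤ set gₙ = q^{n(1+k−Δ)} · Xᵏ · (qⁿX − z)^{−l}, the inverse taken in this field (note qⁿX − z ≠ 0). Then for every n ∈ ℤ the q-adic order of gₙ is at least |n|; consequently, for every d ∈ ℤ only finitely many gₙ have a nonzero coefficient of q^d, the family (gₙ)_{n∈ℤ} is summable in the q-adic topology, and the sum ∑_{n∈ℤ} gₙ involves no negative powers of q, i.e. it is a formal power series in q with coefficients in ℂ(X). Moreover, for l = 1 there are no natural numbers Δ, k satisfying Δ < k+1 < Δ+l, while k = Δ and l = 2 always satisfy it. -/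
open scoped Classical

/-- The variable `q` of the field `ℂ(X)((q))` of formal Laurent series over `ℂ(X)`. -/
noncomputable def qvar : LaurentSeries (RatFunc ℂ) :=
  HahnSeries.single (1 : ℤ) (1 : RatFunc ℂ)

/-- The rational-function variable `X`, viewed as a constant Laurent series in `q`. -/
noncomputable def Xvar : LaurentSeries (RatFunc ℂ) :=
  HahnSeries.C (RatFunc.X : RatFunc ℂ)

/-- A constant `z ∈ ℂ`, viewed as an element of `ℂ(X)((q))`. -/
noncomputable def zconst (z : ℂ) : LaurentSeries (RatFunc ℂ) :=
  HahnSeries.C (RatFunc.C z)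

/-- The family `gₙ = q^{n(1+k−Δ)}·Xᵏ·(qⁿX − z)^{−l}` in the field `ℂ(X)((q))`. -/
noncomputable def gfam (Δ k l : ℕ) (z : ℂ) (n : ℤ) : LaurentSeries (RatFunc ℂ) :=
  qvar ^ (n * (1 + (k : ℤ) - (Δ : ℤ))) * Xvar ^ k *
    (qvar ^ n * Xvar - zconst z) ^ (-(l : ℤ))

lemma aux_order_inv (x : LaurentSeries (RatFunc ℂ)) (hx : x ≠ 0) :
    (x⁻¹).order = -x.order := by
  have hinv : (x⁻¹ : LaurentSeries (RatFunc ℂ)) ≠ 0 :=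
    inv_ne_zero (G₀ := LaurentSeries (RatFunc ℂ)) hx
  have h := HahnSeries.order_mul (x := x) (y := x⁻¹) hx hinv
  have h2 : x * x⁻¹ = (1 : LaurentSeries (RatFunc ℂ)) :=
    mul_inv_cancel₀ (G₀ := LaurentSeries (RatFunc ℂ)) hx
  rw [h2, HahnSeries.order_one] at h
  linarith

lemma aux_order_zpow (x : LaurentSeries (RatFunc ℂ)) (hx : x ≠ 0) (m : ℤ) :
    (x ^ m).order = m * x.order := by
  rcases m with m | m
  · rw [Int.ofNat_eq_coe, zpow_natCast, HahnSeries.order_pow]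
    simp
  · rw [zpow_negSucc, aux_order_inv _ (pow_ne_zero _ hx), HahnSeries.order_pow,
      Int.negSucc_eq]
    ring

lemma aux_qpow (m : ℤ) : qvar ^ m = HahnSeries.single m (1 : RatFunc ℂ) := by
  rcases m with m | m
  · rw [Int.ofNat_eq_coe, zpow_natCast, qvar, HahnSeries.single_pow]
    simp
  · rw [zpow_negSucc, qvar, HahnSeries.single_pow]
    simp only [one_pow]
    have h0 : ((m+1 : ℕ) • (1:ℤ)) + Int.negSucc m = 0 := by
      simp [Int.negSucc_eq]
    have : (HahnSeries.single ((m+1 : ℕ) • (1:ℤ)) (1 : RatFunc ℂ)) *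
        HahnSeries.single (Int.negSucc m) (1 : RatFunc ℂ) = 1 := by
      rw [HahnSeries.single_mul_single, h0, one_mul, HahnSeries.single_zero_one]
    exact @inv_eq_of_mul_eq_one_right (LaurentSeries (RatFunc ℂ)) _ _ _ this

lemma aux_C_ne (z : ℂ) (hz : z ≠ 0) : (RatFunc.C z : RatFunc ℂ) ≠ 0 := by
  rw [← RatFunc.algebraMap_C]
  exact RatFunc.algebraMap_ne_zero (Polynomial.C_ne_zero.mpr hz)

lemma aux_X_ne_C (z : ℂ) : (RatFunc.X : RatFunc ℂ) ≠ RatFunc.C z := by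
  intro h
  have h2 := congrArg RatFunc.num h
  rw [RatFunc.num_X, RatFunc.num_C] at h2
  exact Polynomial.X_ne_C z h2

lemma aux_s_eq (z : ℂ) (n : ℤ) :
    qvar ^ n * Xvar - zconst z =
      HahnSeries.single n (RatFunc.X : RatFunc ℂ) -
        HahnSeries.single (0 : ℤ) (RatFunc.C z) := by
  rw [aux_qpow, Xvar, zconst, HahnSeries.C_apply, HahnSeries.C_apply,
    HahnSeries.single_mul_single, add_zero, one_mul]

lemma aux_s_coeff (z : ℂ) (n d : ℤ) :
    (qvar ^ n * Xvar - zconst z).coeff d =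
      (if d = n then (RatFunc.X : RatFunc ℂ) else 0) - (if d = 0 then RatFunc.C z else 0) := by
  rw [aux_s_eq, HahnSeries.coeff_sub, HahnSeries.coeff_single, HahnSeries.coeff_single]
  congr

lemma aux_s_coeff_min (z : ℂ) (hz : z ≠ 0) (n : ℤ) :
    (qvar ^ n * Xvar - zconst z).coeff (min n 0) ≠ 0 := by
  rw [aux_s_coeff]
  rcases lt_trichotomy n 0 with hn | hn | hn
  · rw [min_eq_left hn.le, if_pos rfl, if_neg hn.ne, sub_zero]
    exact RatFunc.X_ne_zero
  · subst hn
    rw [min_self, if_pos rfl, if_pos rfl, sub_ne_zero]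
    exact aux_X_ne_C z
  · rw [min_eq_right hn.le, if_neg hn.ne, if_pos rfl, zero_sub, neg_ne_zero]
    exact aux_C_ne z hz

lemma aux_s_ne (z : ℂ) (hz : z ≠ 0) (n : ℤ) :
    qvar ^ n * Xvar - zconst z ≠ 0 := by
  intro h
  have := aux_s_coeff_min z hz n
  rw [h] at this
  exact this rfl

lemma aux_s_order (z : ℂ) (hz : z ≠ 0) (n : ℤ) :
    (qvar ^ n * Xvar - zconst z).order = min n 0 := by
  apply le_antisymm
  · exact HahnSeries.order_le_of_coeff_ne_zero (aux_s_coeff_min z hz n)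
  · by_contra h
    push_neg at h
    have h1 := mt HahnSeries.coeff_order_eq_zero.mp (aux_s_ne z hz n)
    rw [aux_s_coeff] at h1
    have hn : (qvar ^ n * Xvar - zconst z).order ≠ n := by
      intro he; rw [he] at h; omega
    have h0 : (qvar ^ n * Xvar - zconst z).order ≠ 0 := by
      intro he; rw [he] at h; omega
    rw [if_neg hn, if_neg h0, sub_zero] at h1
    exact h1 rfl

lemma aux_qvar_ne : qvar ≠ 0 := HahnSeries.single_ne_zero one_ne_zero

lemma aux_qvar_order : qvar.order = 1 := HahnSeries.order_single one_ne_zero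

lemma aux_Xvar_ne : Xvar ≠ 0 := by
  rw [Xvar, HahnSeries.C_apply]
  exact HahnSeries.single_ne_zero RatFunc.X_ne_zero

lemma aux_Xvar_order : Xvar.order = 0 := by
  rw [Xvar, HahnSeries.C_apply]
  exact HahnSeries.order_single RatFunc.X_ne_zero

lemma aux_qzpow_ne (m : ℤ) : qvar ^ m ≠ 0 := by
  rw [aux_qpow]; exact HahnSeries.single_ne_zero one_ne_zero

lemma aux_g_order (Δ k l : ℕ) (z : ℂ) (hz : z ≠ 0) (n : ℤ) :
    (gfam Δ k l z n).order = n * (1 + (k : ℤ) - (Δ : ℤ)) - (l : ℤ) * min n 0 := by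
  have hA : qvar ^ (n * (1 + (k : ℤ) - (Δ : ℤ))) ≠ 0 := aux_qzpow_ne _
  have hB : Xvar ^ k ≠ 0 := pow_ne_zero _ aux_Xvar_ne
  have hC : (qvar ^ n * Xvar - zconst z) ^ (-(l : ℤ)) ≠ 0 :=
    zpow_ne_zero (G₀ := LaurentSeries (RatFunc ℂ)) _ (aux_s_ne z hz n)
  rw [gfam, HahnSeries.order_mul (mul_ne_zero hA hB) hC,
    HahnSeries.order_mul hA hB,
    aux_order_zpow _ aux_qvar_ne, aux_qvar_order,
    HahnSeries.order_pow, aux_Xvar_order,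
    aux_order_zpow _ (aux_s_ne z hz n), aux_s_order z hz n]
  simp
  ring

lemma aux_g_order_ge (Δ k l : ℕ) (h1 : Δ < k + 1) (h2 : k + 1 < Δ + l)
    (z : ℂ) (hz : z ≠ 0) (n : ℤ) : |n| ≤ (gfam Δ k l z n).order := by
  rw [aux_g_order Δ k l z hz n]
  have hc : (1 : ℤ) ≤ 1 + (k : ℤ) - (Δ : ℤ) := by
    have : (Δ : ℤ) ≤ k := by exact_mod_cast Nat.lt_succ_iff.mp h1
    linarith
  have hcl : 1 + (k : ℤ) - (Δ : ℤ) - (l : ℤ) ≤ -1 := by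
    have : (k : ℤ) + 1 < (Δ : ℤ) + l := by exact_mod_cast h2
    linarith
  rcases le_or_gt 0 n with hn | hn
  · rw [abs_of_nonneg hn, min_eq_right hn]
    nlinarith
  · rw [abs_of_neg hn, min_eq_left hn.le]
    nlinarith

lemma aux_Ici_pwo : (Set.Ici (0:ℤ)).IsPWO := by
  have h1 : Set.IsPWO (((↑) : ℕ → ℤ) '' Set.univ) :=
    ((Set.isWF_univ_iff (α := ℕ)).2 inferInstance).isPWO.image_of_monotone
      (fun a b h => by exact_mod_cast h)
  have h2 : ((↑) : ℕ → ℤ) '' Set.univ = Set.Ici 0 := by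
    ext x
    simp only [Set.image_univ, Set.mem_range, Set.mem_Ici]
    constructor
    · rintro ⟨m, rfl⟩; positivity
    · intro hx; exact ⟨x.toNat, Int.toNat_of_nonneg hx⟩
  rwa [h2] at h1

/-- Let `Δ, k, l ∈ ℕ` with `Δ < k + 1 < Δ + l` and `z ∈ ℂ`, `z ≠ 0`. Then each `gₙ` has
`q`-adic order at least `|n|`; consequently for every `d` only finitely many `gₙ` have a
nonzero coefficient of `q^d`, the family `(gₙ)` is summable in the `q`-adic topology, and
its sum has no negative powers of `q`. Moreover for `l = 1` there are no `Δ, k` with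
`Δ < k+1 < Δ+l`, while `k = Δ`, `l = 2` always satisfies it. -/
theorem cuspidal_expansion (Δ k l : ℕ) (h1 : Δ < k + 1) (h2 : k + 1 < Δ + l)
    (z : ℂ) (hz : z ≠ 0) :
    (∀ n : ℤ, |n| ≤ (gfam Δ k l z n).order) ∧
    (∀ d : ℤ, {n : ℤ | (gfam Δ k l z n).coeff d ≠ 0}.Finite) ∧
    (∃ F : HahnSeries.SummableFamily ℤ (RatFunc ℂ) ℤ,
      (∀ n : ℤ, F n = gfam Δ k l z n) ∧ ∀ d : ℤ, d < 0 → F.hsum.coeff d = 0) ∧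
    (∀ Δ' k' : ℕ, ¬(Δ' < k' + 1 ∧ k' + 1 < Δ' + 1)) ∧
    (∀ Δ' : ℕ, Δ' < Δ' + 1 ∧ Δ' + 1 < Δ' + 2) := by
  have horder := aux_g_order_ge Δ k l h1 h2 z hz
  have hfin : ∀ d : ℤ, {n : ℤ | (gfam Δ k l z n).coeff d ≠ 0}.Finite := by
    intro d
    apply (Set.finite_Icc (-d) d).subset
    intro n hn
    have h3 : (gfam Δ k l z n).order ≤ d := HahnSeries.order_le_of_coeff_ne_zero hn
    have h4 : |n| ≤ d := le_trans (horder n) h3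
    exact Set.mem_Icc.mpr (abs_le.mp h4)
  refine ⟨horder, hfin, ?_, by omega, by omega⟩
  refine ⟨⟨fun n => gfam Δ k l z n, ?_, hfin⟩, fun n => rfl, ?_⟩
  · apply aux_Ici_pwo.mono
    intro g hg
    simp only [Set.mem_iUnion, HahnSeries.mem_support] at hg
    obtain ⟨n, hn⟩ := hg
    have h3 : (gfam Δ k l z n).order ≤ g := HahnSeries.order_le_of_coeff_ne_zero hn
    have h4 : (0:ℤ) ≤ |n| := abs_nonneg n
    exact le_trans h4 (le_trans (horder n) h3)
  · intro d hd
    rw [HahnSeries.SummableFamily.coeff_hsum]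
    apply finsum_eq_zero_of_forall_eq_zero
    intro n
    apply HahnSeries.coeff_eq_zero_of_lt_order
    calc d < 0 := hd
    _ ≤ |n| := abs_nonneg n
    _ ≤ _ := horder n
end

section
/- For (τ, α) ∈ ℍ × ℂ and A = (a b; c d) ∈ SL(2,ℤ), define the map f_A^{(τ,α)} : ℂ² → ℂ² by f_A^{(τ,α)}(t, ζ) = ( t/(cτ+d), e^{−2πi·t·cα/(cτ+d)}·ζ ), and for γ = (m,n) ∈ ℤ² define g_γ : ℂ² → ℂ² by g_γ(t, ζ) = (t, e^{2πi m t}·ζ). Then for all A, A' ∈ SL(2,ℤ) and γ, γ' ∈ ℤ²: (i) f_A^{A'·(τ,α)} ∘ f_{A'}^{(τ,α)} = f_{AA'}^{(τ,α)}; (ii) g_γ ∘ g_{γ'} = g_{γ+γ'}; (iii) g_γ ∘ f_A^{(τ,α)} = f_A^{(γA)·(τ,α)} ∘ g_{γA}, where γA denotes the row vector (ma+nc, mb+nd). -/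
open Complex

lemma my_denom_ne_zero (A : Matrix.SpecialLinearGroup (Fin 2) ℤ) (τ : ℂ)
    (hτ : 0 < τ.im) :
    ((A.1 1 0 : ℤ) : ℂ) * τ + ((A.1 1 1 : ℤ) : ℂ) ≠ 0 := by
  intro h
  have hdet : (A.1 0 0 : ℤ) * A.1 1 1 - A.1 0 1 * A.1 1 0 = 1 := by
    have := A.2; rwa [Matrix.det_fin_two] at this
  have him := congrArg Complex.im h
  simp [Complex.add_im, Complex.mul_im] at him
  have hc : (A.1 1 0 : ℤ) = 0 := by
    rcases him with h1 | h1
    · exact_mod_cast h1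
    · exact absurd h1 (ne_of_gt hτ)
  have hre := congrArg Complex.re h
  simp [hc] at hre
  have hd : (A.1 1 1 : ℤ) = 0 := by exact_mod_cast hre
  rw [hc, hd] at hdet; simp at hdet

/-- The coordinate change `f_A^{(τ,α)}(t,ζ) = (t/(cτ+d), e^{−2πi·t·cα/(cτ+d)}·ζ)`
associated to `A = (a b; c d) ∈ SL(2,ℤ)` and `(τ,α)`. -/
noncomputable def fmap (A : Matrix.SpecialLinearGroup (Fin 2) ℤ) (τ α : ℂ)
    (p : ℂ × ℂ) : ℂ × ℂ :=
  (p.1 / (((A.1 1 0 : ℤ) : ℂ) * τ + ((A.1 1 1 : ℤ) : ℂ)),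
    Complex.exp (-2 * (Real.pi : ℂ) * Complex.I * p.1 * ((A.1 1 0 : ℤ) : ℂ) * α /
        (((A.1 1 0 : ℤ) : ℂ) * τ + ((A.1 1 1 : ℤ) : ℂ))) * p.2)

/-- The coordinate change `g_γ(t,ζ) = (t, e^{2πimt}·ζ)` associated to `γ = (m,n) ∈ ℤ²`. -/
noncomputable def gmap (m n : ℤ) (p : ℂ × ℂ) : ℂ × ℂ :=
  (p.1, Complex.exp (2 * (Real.pi : ℂ) * Complex.I * (m : ℂ) * p.1) * p.2)

/-- Compatibility of the coordinate changes `f_A^{(τ,α)}` and `g_γ`: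
(i) `f_A^{A'·(τ,α)} ∘ f_{A'}^{(τ,α)} = f_{AA'}^{(τ,α)}`;
(ii) `g_γ ∘ g_{γ'} = g_{γ+γ'}`;
(iii) `g_γ ∘ f_A^{(τ,α)} = f_A^{(γA)·(τ,α)} ∘ g_{γA}` with `γA = (ma+nc, mb+nd)`,
where `A·(τ,α) = ((aτ+b)/(cτ+d), α/(cτ+d))` and `(m,n)·(τ,α) = (τ, α + mτ + n)`. -/
theorem coordinate_changes_compatible
    (A A' : Matrix.SpecialLinearGroup (Fin 2) ℤ) (m n m' n' : ℤ) (τ α : ℂ)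
    (hτ : 0 < τ.im) :
    (∀ p : ℂ × ℂ,
      fmap A
        ((((A'.1 0 0 : ℤ) : ℂ) * τ + ((A'.1 0 1 : ℤ) : ℂ)) /
          (((A'.1 1 0 : ℤ) : ℂ) * τ + ((A'.1 1 1 : ℤ) : ℂ)))
        (α / (((A'.1 1 0 : ℤ) : ℂ) * τ + ((A'.1 1 1 : ℤ) : ℂ)))
        (fmap A' τ α p) = fmap (A * A') τ α p) ∧
    (∀ p : ℂ × ℂ, gmap m n (gmap m' n' p) = gmap (m + m') (n + n') p) ∧
    (∀ p : ℂ × ℂ,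
      gmap m n (fmap A τ α p) =
        fmap A τ
          (α + ((m * A.1 0 0 + n * A.1 1 0 : ℤ) : ℂ) * τ +
            ((m * A.1 0 1 + n * A.1 1 1 : ℤ) : ℂ))
          (gmap (m * A.1 0 0 + n * A.1 1 0) (m * A.1 0 1 + n * A.1 1 1) p)) := by
  have hdet : ((A.1 0 0 : ℤ) : ℂ) * ((A.1 1 1 : ℤ) : ℂ)
      - ((A.1 0 1 : ℤ) : ℂ) * ((A.1 1 0 : ℤ) : ℂ) = 1 := by
    have h := A.2; rw [Matrix.det_fin_two] at h; exact_mod_cast h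
  have hdet' : ((A'.1 0 0 : ℤ) : ℂ) * ((A'.1 1 1 : ℤ) : ℂ)
      - ((A'.1 0 1 : ℤ) : ℂ) * ((A'.1 1 0 : ℤ) : ℂ) = 1 := by
    have h := A'.2; rw [Matrix.det_fin_two] at h; exact_mod_cast h
  have hD' := my_denom_ne_zero A' τ hτ
  have hD := my_denom_ne_zero A τ hτ
  have hDD := my_denom_ne_zero (A * A') τ hτ
  have hent : ∀ i j, (((A * A').1 i j : ℤ) : ℂ)
      = ((A.1 i 0 : ℤ) : ℂ) * ((A'.1 0 j : ℤ) : ℂ)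
        + ((A.1 i 1 : ℤ) : ℂ) * ((A'.1 1 j : ℤ) : ℂ) := by
    intro i j
    have : (A * A').1 i j = A.1 i 0 * A'.1 0 j + A.1 i 1 * A'.1 1 j := by
      simp [Matrix.SpecialLinearGroup.coe_mul, Matrix.mul_apply, Fin.sum_univ_two]
    rw [this]; push_cast; ring
  rw [hent 1 0, hent 1 1] at hDD
  refine ⟨?_, ?_, ?_⟩
  · intro p
    unfold fmap
    simp only [hent]
    have h1 : ((A.1 1 0 : ℤ) : ℂ) * ((((A'.1 0 0 : ℤ) : ℂ) * τ + ((A'.1 0 1 : ℤ) : ℂ)) /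
            (((A'.1 1 0 : ℤ) : ℂ) * τ + ((A'.1 1 1 : ℤ) : ℂ))) + ((A.1 1 1 : ℤ) : ℂ)
        = ((((A.1 1 0 : ℤ) : ℂ) * ((A'.1 0 0 : ℤ) : ℂ) + ((A.1 1 1 : ℤ) : ℂ) * ((A'.1 1 0 : ℤ) : ℂ)) * τ
            + (((A.1 1 0 : ℤ) : ℂ) * ((A'.1 0 1 : ℤ) : ℂ) + ((A.1 1 1 : ℤ) : ℂ) * ((A'.1 1 1 : ℤ) : ℂ)))
          / (((A'.1 1 0 : ℤ) : ℂ) * τ + ((A'.1 1 1 : ℤ) : ℂ)) := by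
      rw [mul_div_assoc', div_add' _ _ _ hD']; congr 1; ring
    refine Prod.ext ?_ ?_
    · simp only
      rw [h1, div_div_eq_mul_div, div_mul_cancel₀ _ hD']
    · simp only
      rw [h1, ← mul_assoc, ← Complex.exp_add]
      congr 2
      rw [div_div_eq_mul_div]
      have hD'c : τ * ((A'.1 1 0 : ℤ) : ℂ) + ((A'.1 1 1 : ℤ) : ℂ) ≠ 0 := by
        intro h; apply hD'; linear_combination h
      have hDDc : τ * (((A.1 1 0 : ℤ) : ℂ) * ((A'.1 0 0 : ℤ) : ℂ) + ((A'.1 1 0 : ℤ) : ℂ) * ((A.1 1 1 : ℤ) : ℂ))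
          + (((A.1 1 0 : ℤ) : ℂ) * ((A'.1 0 1 : ℤ) : ℂ) + ((A'.1 1 1 : ℤ) : ℂ) * ((A.1 1 1 : ℤ) : ℂ)) ≠ 0 := by
        intro h; apply hDD; linear_combination h
      field_simp
      linear_combination (p.1 * α * ((A.1 1 0 : ℤ):ℂ)) * hdet'
  · intro p
    unfold gmap
    refine Prod.ext rfl ?_
    simp only
    rw [← mul_assoc, ← Complex.exp_add]
    congr 2
    push_cast
    ring
  · intro p
    unfold gmap fmap
    refine Prod.ext rfl ?_
    simp only
    rw [← mul_assoc, ← Complex.exp_add, ← mul_assoc, ← Complex.exp_add]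
    congr 2
    push_cast
    field_simp
    linear_combination (-(m:ℂ) * p.1) * hdet
end

section
/- Let N ∈ ℕ and let φ : ℍ × ℂ → ℂ be such that φ(τ, ·) is entire for each τ, and suppose φ satisfies the weight −N, index N/2 modular transformation law: φ((aτ+b)/(cτ+d), α/(cτ+d)) = (cτ+d)^{−N}·exp(πiN·cα²/(cτ+d))·φ(τ, α) for all (a b; c d) ∈ SL(2,ℤ), τ ∈ ℍ, α ∈ ℂ. Fix τ ∈ ℍ and suppose the j-th derivative ∂_w^j φ(τ, w)|_{w=0} vanishes for all 0 ≤ j < N. Then for every (a b; c d) ∈ SL(2,ℤ), writing τ' = (aτ+b)/(cτ+d): ∂_w^N φ(τ', w)|_{w=0} = ∂_w^N φ(τ, w)|_{w=0} and ∂_w^{N+1} φ(τ', w)|_{w=0} = (cτ+d)·∂_w^{N+1} φ(τ, w)|_{w=0}. Equivalently, in the Taylor expansion φ(τ, α) = α^N(ψ₀(τ) + ψ₁(τ)α + ⋯), the coefficient ψ₀ is modular invariant and ψ₁ transforms as a modular form of weight 1. -/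
open Complex Finset

private lemma iteratedDeriv_add' {f g : ℂ → ℂ} (hf : Differentiable ℂ f)
    (hg : Differentiable ℂ g) (n : ℕ) (x : ℂ) :
    iteratedDeriv n (fun z => f z + g z) x = iteratedDeriv n f x + iteratedDeriv n g x := by
  have := iteratedDerivWithin_add (Set.mem_univ x) uniqueDiffOn_univ
    (hf.contDiff (n := n)).contDiffWithinAt (hg.contDiff (n := n)).contDiffWithinAt
  simp only [iteratedDerivWithin_univ] at this
  exact this

private lemma iteratedDeriv_leibniz (n : ℕ) (f g : ℂ → ℂ) (hf : Differentiable ℂ f)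
    (hg : Differentiable ℂ g) (x : ℂ) :
    iteratedDeriv n (fun z => f z * g z) x =
      ∑ i ∈ range (n + 1), (n.choose i : ℂ) *
        (iteratedDeriv i f x * iteratedDeriv (n - i) g x) := by
  induction n generalizing f g with
  | zero => simp
  | succ n ih =>
    have hf' : Differentiable ℂ (deriv f) :=
      ((contDiff_infty_iff_deriv.mp (hf.contDiff (n := (⊤ : ℕ∞)))).2).differentiable
        (by simp)
    have hg' : Differentiable ℂ (deriv g) :=
      ((contDiff_infty_iff_deriv.mp (hg.contDiff (n := (⊤ : ℕ∞)))).2).differentiable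
        (by simp)
    have hd : deriv (fun z => f z * g z) = fun z => deriv f z * g z + f z * deriv g z :=
      funext fun z => deriv_fun_mul (hf z) (hg z)
    rw [iteratedDeriv_succ', hd,
      iteratedDeriv_add' (f := fun z => deriv f z * g z) (g := fun z => f z * deriv g z) ((hf'.mul hg)) ((hf.mul hg')) n x,
      ih (deriv f) g hf' hg, ih f (deriv g) hf hg']
    have hs := Finset.sum_choose_succ_mul (fun i j => iteratedDeriv i f x * iteratedDeriv j g x) n
    rw [hs, add_comm]
    congr 1
    · refine Finset.sum_congr rfl fun i hi => ?_
      simp only [← iteratedDeriv_succ']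
      rw [show n - i + 1 = n + 1 - i from by have := mem_range.mp hi; omega]
    · refine Finset.sum_congr rfl fun i hi => ?_
      rw [← iteratedDeriv_succ']

private lemma key_sum (e k : ℂ → ℂ) (he : Differentiable ℂ e) (hk : Differentiable ℂ k)
    (N : ℕ) (hk0 : ∀ i, i < N → iteratedDeriv i k 0 = 0) (he1 : deriv e 0 = 0)
    (n : ℕ) (hn : n ≤ N + 1) :
    iteratedDeriv n (fun z => e z * k z) 0 = e 0 * iteratedDeriv n k 0 := by
  rw [iteratedDeriv_leibniz n e k he hk 0]
  rw [Finset.sum_eq_single_of_mem 0 (mem_range.mpr (Nat.succ_pos n))]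
  · simp
  · intro b hb hb0
    rcases eq_or_ne b 1 with rfl | hb1
    · simp [iteratedDeriv_one, he1]
    · have hbn := mem_range.mp hb
      have : n - b < N := by omega
      rw [hk0 _ this]
      ring

/-- Let `φ : ℍ × ℂ → ℂ` be entire in the second variable and satisfy the weight `−N`,
index `N/2` modular transformation law. If, at some `τ ∈ ℍ`, `∂_w^j φ(τ, 0) = 0` for all
`j < N`, then for every `A = (a b; c d) ∈ SL(2,ℤ)`, with `τ' = (aτ+b)/(cτ+d)`:
`∂_w^N φ(τ', 0) = ∂_w^N φ(τ, 0)` and `∂_w^{N+1} φ(τ', 0) = (cτ+d)·∂_w^{N+1} φ(τ, 0)`;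
i.e. in `φ(τ,α) = α^N(ψ₀(τ) + ψ₁(τ)α + ⋯)` the coefficient `ψ₀` is modular invariant and
`ψ₁` transforms as a modular form of weight 1. -/
theorem taylor_coefficients_modular (N : ℕ) (φ : ℂ → ℂ → ℂ)
    (hent : ∀ τ : ℂ, 0 < τ.im → Differentiable ℂ (φ τ))
    (hmod : ∀ τ : ℂ, 0 < τ.im → ∀ (A : Matrix.SpecialLinearGroup (Fin 2) ℤ) (α : ℂ),
      φ ((((A.1 0 0 : ℤ) : ℂ) * τ + ((A.1 0 1 : ℤ) : ℂ)) /
          (((A.1 1 0 : ℤ) : ℂ) * τ + ((A.1 1 1 : ℤ) : ℂ)))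
        (α / (((A.1 1 0 : ℤ) : ℂ) * τ + ((A.1 1 1 : ℤ) : ℂ))) =
        (((A.1 1 0 : ℤ) : ℂ) * τ + ((A.1 1 1 : ℤ) : ℂ)) ^ (-(N : ℤ)) *
          Complex.exp ((Real.pi : ℂ) * Complex.I * (N : ℂ) * ((A.1 1 0 : ℤ) : ℂ) *
            α ^ 2 / (((A.1 1 0 : ℤ) : ℂ) * τ + ((A.1 1 1 : ℤ) : ℂ))) * φ τ α)
    (τ : ℂ) (hτ : 0 < τ.im)
    (hvan : ∀ j : ℕ, j < N → iteratedDeriv j (φ τ) 0 = 0) :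
    ∀ A : Matrix.SpecialLinearGroup (Fin 2) ℤ,
      iteratedDeriv N
          (φ ((((A.1 0 0 : ℤ) : ℂ) * τ + ((A.1 0 1 : ℤ) : ℂ)) /
            (((A.1 1 0 : ℤ) : ℂ) * τ + ((A.1 1 1 : ℤ) : ℂ)))) 0 =
        iteratedDeriv N (φ τ) 0 ∧
      iteratedDeriv (N + 1)
          (φ ((((A.1 0 0 : ℤ) : ℂ) * τ + ((A.1 0 1 : ℤ) : ℂ)) /
            (((A.1 1 0 : ℤ) : ℂ) * τ + ((A.1 1 1 : ℤ) : ℂ)))) 0 =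
        (((A.1 1 0 : ℤ) : ℂ) * τ + ((A.1 1 1 : ℤ) : ℂ)) *
          iteratedDeriv (N + 1) (φ τ) 0 := by
  intro A
  have hdet : A.1 0 0 * A.1 1 1 - A.1 0 1 * A.1 1 0 = 1 := by
    have := A.2; rwa [Matrix.det_fin_two] at this
  set c : ℂ := ((A.1 1 0 : ℤ) : ℂ) with hcdef
  set d : ℂ := ((A.1 1 1 : ℤ) : ℂ) with hddef
  set j : ℂ := c * τ + d with hjdef
  have hj : j ≠ 0 := by
    rcases eq_or_ne (A.1 1 0) 0 with h0 | h0
    · have hd0 : A.1 1 1 ≠ 0 := by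
        intro h1; rw [h0, h1] at hdet; simp at hdet
      have : c = 0 := by rw [hcdef, h0]; simp
      rw [hjdef, this, zero_mul, zero_add, hddef]
      exact_mod_cast Int.cast_ne_zero.mpr hd0
    · intro h
      have him : j.im = (A.1 1 0 : ℝ) * τ.im := by
        simp [hjdef, hcdef, hddef]
      rw [h] at him
      have : ((A.1 1 0 : ℝ)) * τ.im ≠ 0 :=
        mul_ne_zero (by exact_mod_cast h0) (ne_of_gt hτ)
      exact this (by simpa using him.symm)
  set τ' : ℂ := ((((A.1 0 0 : ℤ) : ℂ) * τ + ((A.1 0 1 : ℤ) : ℂ)) / j) with hτ'def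
  set c' : ℂ := (Real.pi : ℂ) * Complex.I * (N : ℂ) * c * j with hc'def
  have key : φ τ' = fun β => j ^ (-(N : ℤ)) *
      (Complex.exp (c' * β ^ 2) * φ τ (j * β)) := by
    funext β
    have h1 := hmod τ hτ A (j * β)
    rw [← hcdef, ← hddef, ← hjdef, ← hτ'def, mul_div_cancel_left₀ β hj] at h1
    rw [h1, mul_assoc]
    congr 2
    congr 1
    rw [div_eq_iff hj]
    ring
  have he : Differentiable ℂ (fun β : ℂ => Complex.exp (c' * β ^ 2)) :=
    (((differentiable_pow 2).const_mul c').cexp)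
  have hk : Differentiable ℂ (fun β : ℂ => φ τ (j * β)) :=
    (hent τ hτ).comp (differentiable_id.const_mul j)
  have hkfun : ∀ m : ℕ, iteratedDeriv m (fun β : ℂ => φ τ (j * β)) 0 =
      j ^ m * iteratedDeriv m (φ τ) 0 := by
    intro m
    have := iteratedDeriv_comp_const_mul ((hent τ hτ).contDiff (n := m)) j
    have h2 := congrFun this 0
    simpa using h2
  have hk0 : ∀ i, i < N → iteratedDeriv i (fun β : ℂ => φ τ (j * β)) 0 = 0 := by
    intro i hi; rw [hkfun i, hvan i hi, mul_zero]
  have he1 : deriv (fun β : ℂ => Complex.exp (c' * β ^ 2)) 0 = 0 := by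
    have hu : HasDerivAt (fun β : ℂ => c' * β ^ 2) (c' * (2 * 0 ^ 1)) 0 :=
      (hasDerivAt_pow 2 (0 : ℂ)).const_mul c'
    have := hu.cexp
    rw [this.deriv]
    simp
  have main : ∀ n : ℕ, n ≤ N + 1 →
      iteratedDeriv n (φ τ') 0 = j ^ (-(N : ℤ)) * (j ^ n * iteratedDeriv n (φ τ) 0) := by
    intro n hn
    rw [key]
    have hcm := iteratedDerivWithin_const_mul (Set.mem_univ (0 : ℂ)) uniqueDiffOn_univ
      (j ^ (-(N : ℤ)))
      (f := fun β : ℂ => Complex.exp (c' * β ^ 2) * φ τ (j * β))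
      (n := n) ((he.mul hk).contDiff (n := n)).contDiffWithinAt
    simp only [iteratedDerivWithin_univ] at hcm
    rw [hcm, key_sum _ _ he hk N hk0 he1 n hn, hkfun n]
    simp
  constructor
  · rw [main N (Nat.le_succ N), ← zpow_natCast j N, ← mul_assoc, ← zpow_add₀ hj]
    simp
  · rw [main (N + 1) le_rfl, ← zpow_natCast j (N + 1), ← mul_assoc, ← zpow_add₀ hj]
    norm_num
end

section
/- Let N ∈ ℕ and let φ : ℍ × ℂ → ℂ be such that φ(τ, ·) is entire for each τ, satisfying the weight −N, index N/2 modular transformation law: φ((aτ+b)/(cτ+d), α/(cτ+d)) = (cτ+d)^{−N}·exp(πiN·cα²/(cτ+d))·φ(τ, α) for all (a b; c d) ∈ SL(2,ℤ). Fix τ ∈ ℍ and suppose ∂_w^j φ(τ, w)|_{w=0} = 0 for all 0 ≤ j < N. Define Φ(t, τ, α) = t^N·φ(τ, t + α)·D(τ)/(φ(τ, t)·φ(τ, α)) where D(τ) = ∂_w^N φ(τ, w)|_{w=0}. Then for every (a b; c d) ∈ SL(2,ℤ), writing τ' = (aτ+b)/(cτ+d), and for all t, α with φ(τ, t) ≠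 0 and φ(τ, α) ≠ 0: Φ( t/(cτ+d), τ', α/(cτ+d) ) = exp( 2πiN·ctα/(cτ+d) )·Φ(t, τ, α). -/
open Complex

private lemma iD_add {n : ℕ} {f g : ℂ → ℂ} (x : ℂ) (hf : Differentiable ℂ f)
    (hg : Differentiable ℂ g) :
    iteratedDeriv n (fun w => f w + g w) x = iteratedDeriv n f x + iteratedDeriv n g x := by
  simp only [← iteratedDerivWithin_univ]
  exact iteratedDerivWithin_add (Set.mem_univ x) uniqueDiffOn_univ
    hf.contDiff.contDiffWithinAt hg.contDiff.contDiffWithinAt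

private lemma iD_cmul {n : ℕ} (c : ℂ) {f : ℂ → ℂ} (x : ℂ) (hf : Differentiable ℂ f) :
    iteratedDeriv n (fun w => c * f w) x = c * iteratedDeriv n f x := by
  simp only [← iteratedDerivWithin_univ]
  exact iteratedDerivWithin_const_mul (Set.mem_univ x) uniqueDiffOn_univ c hf.contDiff.contDiffWithinAt

private lemma iD_mul_vanish (N : ℕ) (g f : ℂ → ℂ)
    (hg : Differentiable ℂ g) (hf : Differentiable ℂ f)
    (hvan : ∀ j, j < N → iteratedDeriv j f 0 = 0) :
    iteratedDeriv N (fun w => g w * f w) 0 = g 0 * iteratedDeriv N f 0 := by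
  induction N generalizing f g with
  | zero => simp
  | succ n ih =>
    have hg' : Differentiable ℂ (deriv g) := by
      have := (hg.contDiff (n := (2 : ℕ))).differentiable_iteratedDeriv 1 (by norm_num)
      simpa [iteratedDeriv_one] using this
    have hf' : Differentiable ℂ (deriv f) := by
      have := (hf.contDiff (n := (2 : ℕ))).differentiable_iteratedDeriv 1 (by norm_num)
      simpa [iteratedDeriv_one] using this
    rw [iteratedDeriv_succ', iteratedDeriv_succ']
    have hd : deriv (fun w => g w * f w) = fun w => deriv g w * f w + g w * deriv f w := by
      funext w; exact deriv_fun_mul (hg w) (hf w)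
    rw [hd, iD_add (f := fun w => deriv g w * f w) (g := fun w => g w * deriv f w) 0 ((hg'.mul hf)) (hg.mul hf')]
    have h1 : iteratedDeriv n (fun w => deriv g w * f w) 0 = deriv g 0 * iteratedDeriv n f 0 :=
      ih _ _ hg' hf (fun j hj => hvan j (hj.trans n.lt_succ_self))
    have h2 : iteratedDeriv n (fun w => g w * deriv f w) 0
        = g 0 * iteratedDeriv n (deriv f) 0 := by
      refine ih _ _ hg hf' (fun j hj => ?_)
      rw [← iteratedDeriv_succ']
      exact hvan (j + 1) (Nat.succ_lt_succ hj)
    rw [h1, h2, hvan n n.lt_succ_self, mul_zero, zero_add]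

/-- Let `φ : ℍ × ℂ → ℂ` be entire in the second variable, satisfying the weight `−N`,
index `N/2` modular transformation law, and suppose `∂_w^j φ(τ, 0) = 0` for `j < N` at
some fixed `τ ∈ ℍ`. With `D(τ) = ∂_w^N φ(τ, 0)` and
`Φ(t, τ, α) = t^N·φ(τ, t+α)·D(τ)/(φ(τ,t)·φ(τ,α))`, for every `A = (a b; c d) ∈ SL(2,ℤ)`
and `τ' = (aτ+b)/(cτ+d)`:
`Φ(t/(cτ+d), τ', α/(cτ+d)) = exp(2πiN·ctα/(cτ+d))·Φ(t, τ, α)`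
whenever `φ(τ, t) ≠ 0` and `φ(τ, α) ≠ 0`. -/
theorem Phi_modular_transform (N : ℕ) (φ : ℂ → ℂ → ℂ)
    (hent : ∀ τ : ℂ, 0 < τ.im → Differentiable ℂ (φ τ))
    (hmod : ∀ τ : ℂ, 0 < τ.im → ∀ (A : Matrix.SpecialLinearGroup (Fin 2) ℤ) (α : ℂ),
      φ ((((A.1 0 0 : ℤ) : ℂ) * τ + ((A.1 0 1 : ℤ) : ℂ)) /
          (((A.1 1 0 : ℤ) : ℂ) * τ + ((A.1 1 1 : ℤ) : ℂ)))
        (α / (((A.1 1 0 : ℤ) : ℂ) * τ + ((A.1 1 1 : ℤ) : ℂ))) =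
        (((A.1 1 0 : ℤ) : ℂ) * τ + ((A.1 1 1 : ℤ) : ℂ)) ^ (-(N : ℤ)) *
          Complex.exp ((Real.pi : ℂ) * Complex.I * (N : ℂ) * ((A.1 1 0 : ℤ) : ℂ) *
            α ^ 2 / (((A.1 1 0 : ℤ) : ℂ) * τ + ((A.1 1 1 : ℤ) : ℂ))) * φ τ α)
    (τ : ℂ) (hτ : 0 < τ.im)
    (hvan : ∀ j : ℕ, j < N → iteratedDeriv j (φ τ) 0 = 0) :
    ∀ A : Matrix.SpecialLinearGroup (Fin 2) ℤ, ∀ t α : ℂ, φ τ t ≠ 0 → φ τ α ≠ 0 →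
      (t / (((A.1 1 0 : ℤ) : ℂ) * τ + ((A.1 1 1 : ℤ) : ℂ))) ^ N *
          φ ((((A.1 0 0 : ℤ) : ℂ) * τ + ((A.1 0 1 : ℤ) : ℂ)) /
              (((A.1 1 0 : ℤ) : ℂ) * τ + ((A.1 1 1 : ℤ) : ℂ)))
            (t / (((A.1 1 0 : ℤ) : ℂ) * τ + ((A.1 1 1 : ℤ) : ℂ)) +
              α / (((A.1 1 0 : ℤ) : ℂ) * τ + ((A.1 1 1 : ℤ) : ℂ))) *
          iteratedDeriv N
            (φ ((((A.1 0 0 : ℤ) : ℂ) * τ + ((A.1 0 1 : ℤ) : ℂ)) /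
              (((A.1 1 0 : ℤ) : ℂ) * τ + ((A.1 1 1 : ℤ) : ℂ)))) 0 /
          (φ ((((A.1 0 0 : ℤ) : ℂ) * τ + ((A.1 0 1 : ℤ) : ℂ)) /
                (((A.1 1 0 : ℤ) : ℂ) * τ + ((A.1 1 1 : ℤ) : ℂ)))
              (t / (((A.1 1 0 : ℤ) : ℂ) * τ + ((A.1 1 1 : ℤ) : ℂ))) *
            φ ((((A.1 0 0 : ℤ) : ℂ) * τ + ((A.1 0 1 : ℤ) : ℂ)) /
                (((A.1 1 0 : ℤ) : ℂ) * τ + ((A.1 1 1 : ℤ) : ℂ)))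
              (α / (((A.1 1 0 : ℤ) : ℂ) * τ + ((A.1 1 1 : ℤ) : ℂ)))) =
        Complex.exp (2 * (Real.pi : ℂ) * Complex.I * (N : ℂ) * ((A.1 1 0 : ℤ) : ℂ) *
            t * α / (((A.1 1 0 : ℤ) : ℂ) * τ + ((A.1 1 1 : ℤ) : ℂ))) *
          (t ^ N * φ τ (t + α) * iteratedDeriv N (φ τ) 0 / (φ τ t * φ τ α)) := by

  intro A t α hφt hφα
  have hdet : (A.1 0 0) * (A.1 1 1) - (A.1 0 1) * (A.1 1 0) = 1 := by
    have := A.2; rwa [Matrix.det_fin_two] at this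
  set a : ℂ := ((A.1 0 0 : ℤ) : ℂ) with ha
  set b : ℂ := ((A.1 0 1 : ℤ) : ℂ) with hb
  set c : ℂ := ((A.1 1 0 : ℤ) : ℂ) with hc
  set d : ℂ := ((A.1 1 1 : ℤ) : ℂ) with hd
  set j : ℂ := c * τ + d with hjdef
  -- j ≠ 0
  have hj : j ≠ 0 := by
    intro h0
    have him : ((A.1 1 0 : ℤ) : ℝ) * τ.im = 0 := by
      have := congrArg Complex.im h0
      simpa [hjdef, hc, hd, Complex.add_im, Complex.mul_im] using this
    have hc0 : (A.1 1 0 : ℤ) = 0 := by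
      rcases mul_eq_zero.1 him with h | h
      · exact_mod_cast h
      · exact absurd h hτ.ne'
    have hd0 : (A.1 1 1 : ℤ) = 0 := by
      have : d = 0 := by
        rw [hjdef, hc] at h0; simp [hc0] at h0; exact h0
      rw [hd] at this; exact_mod_cast this
    rw [hc0, hd0] at hdet; simp at hdet
  have hD : iteratedDeriv N
      (φ ((a * τ + b) / j)) 0 = iteratedDeriv N (φ τ) 0 := by
    have hfun : φ ((a * τ + b) / j)
        = fun w => j ^ (-(N : ℤ)) *
            (Complex.exp ((Real.pi : ℂ) * Complex.I * (N : ℂ) * c * (j * w) ^ 2 / j) *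
              φ τ (j * w)) := by
      funext w
      have := hmod τ hτ A (j * w)
      rw [mul_div_cancel_left₀ w hj] at this
      rw [this]; ring
    rw [hfun]
    have hexp : Differentiable ℂ
        (fun w => Complex.exp ((Real.pi : ℂ) * Complex.I * (N : ℂ) * c * (j * w) ^ 2 / j)) := by
      apply Complex.differentiable_exp.comp
      apply Differentiable.div_const
      apply Differentiable.const_mul
      exact (differentiable_const j |>.mul differentiable_id).pow 2
    have hcomp : Differentiable ℂ (fun w => φ τ (j * w)) :=
      (hent τ hτ).comp ((differentiable_const j).mul differentiable_id)
    rw [iD_cmul (f := fun w => Complex.exp ((Real.pi : ℂ) * Complex.I * (N : ℂ) * c * (j * w) ^ 2 / j) *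
      φ τ (j * w)) _ _ (hexp.mul hcomp)]
    have hiter := iteratedDeriv_comp_const_mul (n := N) ((hent τ hτ).contDiff) j
    have hvan' : ∀ m, m < N → iteratedDeriv m (fun w => φ τ (j * w)) 0 = 0 := by
      intro m hm
      have := iteratedDeriv_comp_const_mul (n := m) ((hent τ hτ).contDiff) j
      have h2 := congrFun this 0
      simp only [mul_zero] at h2
      rw [show (fun w => φ τ (j * w)) = (fun w => φ τ (j * w)) from rfl, h2,
        hvan m hm, mul_zero]
    rw [iD_mul_vanish N _ _ hexp hcomp hvan']
    have h2 := congrFun hiter 0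
    simp only [mul_zero] at h2
    rw [h2]
    have hz : (Real.pi : ℂ) * Complex.I * (N : ℂ) * c * (j * 0) ^ 2 / j = 0 := by ring
    rw [hz, Complex.exp_zero, one_mul, zpow_neg, zpow_natCast,
      inv_mul_cancel_left₀ (pow_ne_zero N hj)]
  have ht' := hmod τ hτ A t
  have hα' := hmod τ hτ A α
  have htα := hmod τ hτ A (t + α)
  rw [← add_div] at *
  rw [← ha, ← hb, ← hc, ← hd, ← hjdef] at *
  rw [hD, ht', hα', htα]
  have hexpeq : Complex.exp ((Real.pi : ℂ) * Complex.I * (N : ℂ) * c * (t + α) ^ 2 / j)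
      = Complex.exp (2 * (Real.pi : ℂ) * Complex.I * (N : ℂ) * c * t * α / j) *
        (Complex.exp ((Real.pi : ℂ) * Complex.I * (N : ℂ) * c * t ^ 2 / j) *
          Complex.exp ((Real.pi : ℂ) * Complex.I * (N : ℂ) * c * α ^ 2 / j)) := by
    rw [← Complex.exp_add, ← Complex.exp_add]
    congr 1
    field_simp
    ring
  rw [hexpeq, zpow_neg, zpow_natCast]
  have hE1 := Complex.exp_ne_zero ((Real.pi : ℂ) * Complex.I * (N : ℂ) * c * t ^ 2 / j)
  have hE2 := Complex.exp_ne_zero ((Real.pi : ℂ) * Complex.I * (N : ℂ) * c * α ^ 2 / j)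
  have hjN : (j : ℂ) ^ N ≠ 0 := pow_ne_zero _ hj
  field_simp
  have hjinv : j ^ N * j⁻¹ ^ N = 1 := by rw [← mul_pow, mul_inv_cancel₀ hj, one_pow]
  linear_combination (t ^ N * φ τ (t + α) * iteratedDeriv N (φ τ) 0) * hjinv
end
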